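/- Let 𝔰 = (s_1,…,s_r) be a tuple of positive integers and u = (u_1,…,u_r) ∈ F^r with |u_k| < q^{s_k·q/(q−1)} for every 1 ≤ k ≤ r. For a subset S ⊆ {1,…,r−1}, let B_1 < B_2 < ⋯ < B_{r−|S|} be the blocks of the partition of {1,…,r} into maximal runs of consecutive integers generated by identifying k with k+1 for each k ∈ S, and set 𝔰_S := (Σ_{k∈B_1} s_k, …, Σ_{k∈B_{r−|S|}} s_k) and u_S := (Π_{k∈B_1} u_k, …, Π_{k∈B_{r−|S|}} u_k). Then the family defining 𝔏i_{𝔰,u} and, for every S ⊆ {1,…,r−1}, the family defining 𝔏i⋆_{𝔰_S,u_S} are summable in F[[t]] for the product topology, and one has the inclusion–exclusion identity 𝔏i_{𝔰,u} = Σ_{S⊆{1,…,r−1}} (−1)^{|S|}·𝔏i⋆_{𝔰_S,u_S} in F[[t]]. (This is the identity, used in the proof of Lemma 5.2 of the paper, expressing a t-motivic Carlitz multiple polylogarithm as an alternating sum of t-motivic Carlitz multiple star polylogarithms at merged indices and merged points.) -/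

import Mathlib

open PowerSeries Filter Topology
open scoped ENNReal

noncomputable section

/-- The product (coefficientwise) topology on `PowerSeries F`. -/
instance psTop {F : Type*} [Semiring F] [TopologicalSpace F] :
    TopologicalSpace (PowerSeries F) :=
  TopologicalSpace.induced (fun φ (n : ℕ) => PowerSeries.coeff (R := F) n φ) inferInstance

variable {F : Type*} [Field F]

/-- `𝕃_i = (t-θ^q)⋯(t-θ^{q^i})` as a formal power series. -/
def LL (q : ℕ) (θ : F) (i : ℕ) : PowerSeries F :=
  ∏ m ∈ Finset.range i, (PowerSeries.X - PowerSeries.C (R := F) (θ ^ q ^ (m + 1)))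

/-- General term `u_1^{q^{i_1}}⋯u_r^{q^{i_r}}·(𝕃_{i_1}^{s_1}⋯𝕃_{i_r}^{s_r})⁻¹` of a
t-motivic Carlitz multiple (star) polylogarithm. -/
def polyLogTerm (q : ℕ) (θ : F) {r : ℕ} (s : Fin r → ℕ) (u : Fin r → F)
    (i : Fin r → ℕ) : PowerSeries F :=
  ∏ k, PowerSeries.C (R := F) (u k ^ q ^ i k) * (LL q θ (i k) ^ s k)⁻¹

/-! ### Transfer of summability through the coefficientwise topology -/

section Transfer

variable {G : Type*} [Semiring G] [TopologicalSpace G]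

theorem ps_hasSum_iff {ι : Type*} (f : ι → PowerSeries G) (a : PowerSeries G) :
    HasSum f a ↔ ∀ n, HasSum (fun i => PowerSeries.coeff (R := G) n (f i)) (PowerSeries.coeff (R := G) n a) := by
  rw [HasSum]
  rw [show (psTop : TopologicalSpace (PowerSeries G)) =
    TopologicalSpace.induced (fun φ (n : ℕ) => PowerSeries.coeff (R := G) n φ) inferInstance from rfl]
  rw [nhds_induced, Filter.tendsto_comap_iff]
  rw [tendsto_pi_nhds]
  constructor
  · intro h n
    have := h n
    rw [HasSum]
    convert this using 1
    funext s
    simp [Function.comp, map_sum]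
  · intro h n
    have := h n
    rw [HasSum] at this
    convert this using 1
    funext s
    simp [Function.comp, map_sum]

theorem ps_summable_of_coeff {ι : Type*} {f : ι → PowerSeries G}
    (h : ∀ n, Summable fun i => PowerSeries.coeff (R := G) n (f i)) : Summable f := by
  refine ⟨PowerSeries.mk fun n => ∑' i, PowerSeries.coeff (R := G) n (f i),
    (ps_hasSum_iff f _).2 fun n => ?_⟩
  simpa using (h n).hasSum

theorem ps_coeff_tsum {ι : Type*} [T2Space G] {f : ι → PowerSeries G} (h : Summable f) (n : ℕ) :
    PowerSeries.coeff (R := G) n (∑' i, f i) = ∑' i, PowerSeries.coeff (R := G) n (f i) :=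
  (((ps_hasSum_iff f _).1 h.hasSum) n).tsum_eq.symm

end Transfer

/-! ### Inverses of products of power series and coefficient estimates -/

theorem inv_X_sub_C {a : F} (ha : a ≠ 0) :
    (PowerSeries.X - PowerSeries.C (R := F) a)⁻¹ = PowerSeries.mk fun n => -(a⁻¹ ^ (n + 1)) := by
  symm
  rw [PowerSeries.eq_inv_iff_mul_eq_one (by simp [ha])]
  ext n
  rw [mul_sub]
  rcases n with _ | m
  · simp [ha]
  · simp only [map_sub, PowerSeries.coeff_succ_mul_X, PowerSeries.coeff_mul_C,
      PowerSeries.coeff_mk, PowerSeries.coeff_one, Nat.succ_ne_zero, if_false]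
    field_simp
    rw [pow_succ (1 / a) (m + 1), mul_comm a, mul_assoc, one_div, inv_mul_cancel₀ ha, mul_one,
      sub_neg_eq_add, neg_add_cancel]

theorem ps_prod_inv {ι : Type*} (t : Finset ι) (f : ι → PowerSeries F) :
    (∏ k ∈ t, f k)⁻¹ = ∏ k ∈ t, (f k)⁻¹ := by
  classical
  induction t using Finset.induction_on with
  | empty => simp
  | insert a t h ih => rw [Finset.prod_insert h, Finset.prod_insert h, PowerSeries.mul_inv_rev, ih,
      mul_comm]

theorem ps_pow_inv (φ : PowerSeries F) (m : ℕ) : (φ ^ m)⁻¹ = φ⁻¹ ^ m := by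
  induction m with
  | zero => simp
  | succ n ih => rw [pow_succ, PowerSeries.mul_inv_rev, ih, pow_succ, mul_comm]

theorem LL_pow_inv (q : ℕ) (θ : F) (i s : ℕ) :
    (LL q θ i ^ s)⁻¹
      = ∏ m ∈ Finset.range i, ((PowerSeries.X - PowerSeries.C (R := F) (θ ^ q ^ (m + 1)))⁻¹) ^ s := by
  rw [LL, ← Finset.prod_pow, ps_prod_inv]
  exact Finset.prod_congr rfl fun m _ => ps_pow_inv _ s

/-- merging of indices: the star term at merged data equals the original term at the
tuple constant on blocks -/
theorem polyLogTerm_merge (q : ℕ) (θ : F) {r : ℕ} (s : Fin r → ℕ) (u : Fin r → F)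
    (c : Composition r) (i : Fin c.length → ℕ) :
    polyLogTerm q θ (fun b => ∑ j, s (c.embedding b j)) (fun b => ∏ j, u (c.embedding b j)) i
      = polyLogTerm q θ s u (fun k => i (c.index k)) := by
  rw [polyLogTerm, polyLogTerm]
  rw [← Equiv.prod_comp c.blocksFinEquiv
    (fun k => PowerSeries.C (R := F) (u k ^ q ^ i (c.index k)) * (LL q θ (i (c.index k)) ^ s k)⁻¹)]
  rw [show (Finset.univ : Finset ((b : Fin c.length) × Fin (c.blocksFun b)))
    = Finset.univ.sigma (fun _ => Finset.univ) from (Finset.univ_sigma_univ).symm]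
  rw [Finset.prod_sigma]
  refine Finset.prod_congr rfl fun b _ => ?_
  have hemb : ∀ j : Fin (c.blocksFun b), c.index (c.blocksFinEquiv ⟨b, j⟩) = b := by
    intro j
    exact c.index_embedding b j
  calc PowerSeries.C (R := F) ((∏ j, u (c.embedding b j)) ^ q ^ i b)
        * (LL q θ (i b) ^ ∑ j, s (c.embedding b j))⁻¹
      = (∏ j, PowerSeries.C (R := F) (u (c.embedding b j) ^ q ^ i b))
        * ∏ j, (LL q θ (i b) ^ s (c.embedding b j))⁻¹ := by
        rw [← Finset.prod_pow, map_prod, ← Finset.prod_pow_eq_pow_sum, ps_prod_inv]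
    _ = ∏ j, PowerSeries.C (R := F) (u (c.embedding b j) ^ q ^ i b)
          * (LL q θ (i b) ^ s (c.embedding b j))⁻¹ := by
        rw [Finset.prod_mul_distrib]
    _ = _ := by
        refine Finset.prod_congr rfl fun j _ => ?_
        rw [hemb j]
        rfl

section Norm

variable {K : Type*} [NormedField K] [IsUltrametricDist K]

theorem coeff_mul_bound {φ ψ : PowerSeries K} {B C : ℝ} (hB : 0 ≤ B) (hC : 0 ≤ C)
    (hφ : ∀ m, ‖PowerSeries.coeff (R := K) m φ‖ ≤ B) (hψ : ∀ m, ‖PowerSeries.coeff (R := K) m ψ‖ ≤ C) :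
    ∀ m, ‖PowerSeries.coeff (R := K) m (φ * ψ)‖ ≤ B * C := by
  intro m
  rw [PowerSeries.coeff_mul]
  apply IsUltrametricDist.norm_sum_le_of_forall_le_of_nonneg (mul_nonneg hB hC)
  intro p _
  rw [norm_mul]
  exact mul_le_mul (hφ _) (hψ _) (norm_nonneg _) hB

theorem coeff_prod_bound {ι : Type*} (t : Finset ι) (f : ι → PowerSeries K) (B : ι → ℝ)
    (hB : ∀ k ∈ t, 0 ≤ B k) (hf : ∀ k ∈ t, ∀ m, ‖PowerSeries.coeff (R := K) m (f k)‖ ≤ B k) :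
    ∀ m, ‖PowerSeries.coeff (R := K) m (∏ k ∈ t, f k)‖ ≤ ∏ k ∈ t, B k := by
  classical
  induction t using Finset.induction_on with
  | empty => intro m; simp [PowerSeries.coeff_one]; split <;> simp
  | @insert a t ha ih =>
      rw [Finset.prod_insert ha, Finset.prod_insert ha]
      exact coeff_mul_bound (hB a (Finset.mem_insert_self a t))
        (Finset.prod_nonneg fun k hk => hB k (Finset.mem_insert_of_mem hk))
        (hf a (Finset.mem_insert_self a t))
        (ih (fun k hk => hB k (Finset.mem_insert_of_mem hk))
          (fun k hk => hf k (Finset.mem_insert_of_mem hk)))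

theorem coeff_pow_bound {φ : PowerSeries K} {B : ℝ} (hB : 0 ≤ B)
    (hφ : ∀ m, ‖PowerSeries.coeff (R := K) m φ‖ ≤ B) (s : ℕ) :
    ∀ m, ‖PowerSeries.coeff (R := K) m (φ ^ s)‖ ≤ B ^ s := by
  intro m
  have := coeff_prod_bound (Finset.range s) (fun _ => φ) (fun _ => B)
    (fun _ _ => hB) (fun _ _ => hφ) m
  simpa using this

theorem coeff_LL_pow_inv_bound {q : ℕ} (hq2 : 2 ≤ q) {θ : K} (hθ : ‖θ‖ = (q : ℝ))
    (i s : ℕ) (m : ℕ) :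
    ‖PowerSeries.coeff (R := K) m ((LL q θ i ^ s)⁻¹)‖
      ≤ ∏ m' ∈ Finset.range i, (((q : ℝ) ^ q ^ (m' + 1))⁻¹) ^ s := by
  have hq0 : (0:ℝ) < q := by positivity
  have hθ0 : θ ≠ 0 := by
    intro h; rw [h, norm_zero] at hθ; exact absurd hθ.symm (ne_of_gt hq0)
  rw [LL_pow_inv]
  refine coeff_prod_bound _ _ _ (fun k _ => by positivity) (fun k _ => ?_) m
  refine coeff_pow_bound (by positivity) (fun m' => ?_) s
  have ha : θ ^ q ^ (k + 1) ≠ 0 := pow_ne_zero _ hθ0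
  rw [inv_X_sub_C ha, PowerSeries.coeff_mk, norm_neg, norm_pow, norm_inv, norm_pow, hθ]
  have h1 : ((q:ℝ) ^ q ^ (k+1))⁻¹ ≤ 1 := by
    rw [inv_le_one_iff₀]
    right
    exact one_le_pow₀ (by norm_num; omega)
  calc (((q:ℝ) ^ q ^ (k+1))⁻¹) ^ (m' + 1) ≤ (((q:ℝ) ^ q ^ (k+1))⁻¹) ^ 1 :=
        pow_le_pow_of_le_one (by positivity) h1 (by omega)
    _ = ((q:ℝ) ^ q ^ (k+1))⁻¹ := pow_one _

theorem key_exp_eq {q : ℕ} (hq2 : 2 ≤ q) (s i : ℕ) :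
    ∏ m ∈ Finset.range i, (((q : ℝ) ^ q ^ (m + 1))⁻¹) ^ s
      = (((q : ℝ) ^ ((s : ℝ) * (q : ℝ) / ((q : ℝ) - 1))) ^ (q ^ i - 1))⁻¹ := by
  have hx : (1:ℝ) < (q:ℝ) := by exact_mod_cast Nat.lt_of_lt_of_le Nat.one_lt_two hq2
  have hx0 : (0:ℝ) < q := lt_trans one_pos hx
  have hxne : (q:ℝ) - 1 ≠ 0 := sub_ne_zero.2 (ne_of_gt hx)
  have h1 : ∏ m ∈ Finset.range i, (((q : ℝ) ^ q ^ (m + 1))⁻¹) ^ s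
      = ((q:ℝ) ^ (∑ m ∈ Finset.range i, q ^ (m+1) * s))⁻¹ := by
    simp only [inv_pow]
    rw [Finset.prod_inv_distrib]
    congr 1
    rw [← Finset.prod_pow_eq_pow_sum]
    exact Finset.prod_congr rfl fun m _ => by rw [pow_mul]
  rw [h1]
  congr 1
  rw [← Real.rpow_natCast ((q:ℝ) ^ ((s : ℝ) * (q : ℝ) / ((q : ℝ) - 1))) (q ^ i - 1),
    ← Real.rpow_natCast (q:ℝ) (∑ m ∈ Finset.range i, q ^ (m+1) * s),
    ← Real.rpow_mul (le_of_lt hx0)]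
  congr 1
  have hgeom : (∑ m ∈ Finset.range i, (q:ℝ)^m) * ((q:ℝ)-1) = (q:ℝ)^i - 1 := geom_sum_mul _ i
  have hcast : ((q ^ i - 1 : ℕ) : ℝ) = (q:ℝ)^i - 1 := by
    have : 1 ≤ q ^ i := Nat.one_le_pow _ _ (by omega)
    push_cast [this]
    ring
  have hcast2 : ((∑ m ∈ Finset.range i, q ^ (m+1) * s : ℕ) : ℝ)
      = ∑ m ∈ Finset.range i, (q:ℝ) ^ (m+1) * s := by push_cast; ring
  rw [hcast, hcast2]
  have hsum : ∑ m ∈ Finset.range i, (q:ℝ) ^ (m+1) * s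
      = (q:ℝ) * (s:ℝ) * ∑ m ∈ Finset.range i, (q:ℝ)^m := by
    rw [Finset.mul_sum]
    exact Finset.sum_congr rfl fun m _ => by ring
  rw [hsum]
  field_simp
  linear_combination (s:ℝ) * hgeom

theorem key_bound {q : ℕ} (hq2 : 2 ≤ q) {u : K} {s i : ℕ}
    (hu : ‖u‖ < (q : ℝ) ^ ((s : ℝ) * (q : ℝ) / ((q : ℝ) - 1))) :
    ‖u‖ ^ q ^ i * (((q : ℝ) ^ ((s : ℝ) * (q : ℝ) / ((q : ℝ) - 1))) ^ (q ^ i - 1))⁻¹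
      ≤ ((q : ℝ) ^ ((s : ℝ) * (q : ℝ) / ((q : ℝ) - 1)))
        * (‖u‖ / ((q : ℝ) ^ ((s : ℝ) * (q : ℝ) / ((q : ℝ) - 1)))) ^ i := by
  set c : ℝ := (q : ℝ) ^ ((s : ℝ) * (q : ℝ) / ((q : ℝ) - 1)) with hc
  have hq0 : (0:ℝ) < q := by positivity
  have hc0 : 0 < c := Real.rpow_pos_of_pos hq0 _
  have h1 : 1 ≤ q ^ i := Nat.one_le_pow _ _ (by omega)
  have hstep : ‖u‖ ^ q ^ i * (c ^ (q ^ i - 1))⁻¹ = c * (‖u‖ / c) ^ q ^ i := by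
    rw [div_pow]
    have : c ^ q ^ i = c ^ (q ^ i - 1) * c := by
      rw [← pow_succ]; congr 1; omega
    rw [this]
    field_simp
  rw [hstep]
  have hb0 : 0 ≤ ‖u‖ / c := by positivity
  have hb1 : ‖u‖ / c ≤ 1 := by
    rw [div_le_one hc0]; exact le_of_lt hu
  have : (‖u‖ / c) ^ q ^ i ≤ (‖u‖ / c) ^ i :=
    pow_le_pow_of_le_one hb0 hb1 (le_of_lt (Nat.lt_pow_self (n := i) (by omega)))
  exact mul_le_mul_of_nonneg_left this (le_of_lt hc0)

theorem polyLogTerm_coeff_bound {q : ℕ} (hq2 : 2 ≤ q) {θ : K} (hθ : ‖θ‖ = (q : ℝ))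
    {r : ℕ} (s : Fin r → ℕ) (u : Fin r → K)
    (hu : ∀ k, ‖u k‖ < (q : ℝ) ^ ((s k : ℝ) * (q : ℝ) / ((q : ℝ) - 1)))
    (n : ℕ) (i : Fin r → ℕ) :
    ‖PowerSeries.coeff (R := K) n (polyLogTerm q θ s u i)‖
      ≤ ∏ k, ((q : ℝ) ^ ((s k : ℝ) * (q : ℝ) / ((q : ℝ) - 1)))
          * (‖u k‖ / ((q : ℝ) ^ ((s k : ℝ) * (q : ℝ) / ((q : ℝ) - 1)))) ^ i k := by
  have hq0 : (0:ℝ) < q := by positivity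
  rw [polyLogTerm]
  refine coeff_prod_bound _ _ _ (fun k _ => by positivity) (fun k _ m => ?_) n
  rw [PowerSeries.coeff_C_mul, norm_mul, norm_pow]
  calc ‖u k‖ ^ q ^ i k * ‖PowerSeries.coeff (R := K) m ((LL q θ (i k) ^ s k)⁻¹)‖
      ≤ ‖u k‖ ^ q ^ i k
        * (((q : ℝ) ^ ((s k : ℝ) * (q : ℝ) / ((q : ℝ) - 1))) ^ (q ^ i k - 1))⁻¹ := by
        refine mul_le_mul_of_nonneg_left ?_ (by positivity)
        rw [← key_exp_eq hq2]
        exact coeff_LL_pow_inv_bound hq2 hθ _ _ _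
    _ ≤ _ := key_bound hq2 (hu k)

end Norm

theorem summable_pi_prod : ∀ {n : ℕ} (h : Fin n → ℕ → ℝ), (∀ k, Summable (h k)) →
    (∀ k m, 0 ≤ h k m) → Summable (fun i : Fin n → ℕ => ∏ k, h k (i k)) := by
  intro n
  induction n with
  | zero => intro h _ _; exact Summable.of_finite
  | succ n ih =>
      intro h hs hnn
      rw [← Equiv.summable_iff (Fin.consEquiv (fun _ : Fin (n+1) => ℕ))]
      have heq : (fun i : Fin (n+1) → ℕ => ∏ k, h k (i k)) ∘ (Fin.consEquiv (fun _ : Fin (n+1) => ℕ))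
          = fun p : ℕ × (Fin n → ℕ) => h 0 p.1 * ∏ k : Fin n, h k.succ (p.2 k) := by
        funext p
        simp [Fin.prod_univ_succ, Fin.consEquiv, Fin.cons_zero, Fin.cons_succ]
      have hsum : Summable (fun p : ℕ × (Fin n → ℕ) => h 0 p.1 * ∏ k : Fin n, h k.succ (p.2 k)) := by
        apply Summable.mul_of_nonneg (f := h 0)
          (g := fun i : Fin n → ℕ => ∏ k : Fin n, h k.succ (i k))
        · exact hs 0
        · exact ih (fun k => h k.succ) (fun k => hs k.succ) (fun k m => hnn k.succ m)
        · exact fun m => hnn 0 m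
        · exact fun p => Finset.prod_nonneg fun k _ => hnn _ _
      exact hsum.congr (fun p => (congrFun heq p).symm)

section Master

variable {K : Type*} [NormedField K] [IsUltrametricDist K] [CompleteSpace K]

theorem polyLogTerm_coeff_summable {q : ℕ} (hq2 : 2 ≤ q) {θ : K} (hθ : ‖θ‖ = (q : ℝ))
    {r : ℕ} (s : Fin r → ℕ) (u : Fin r → K)
    (hu : ∀ k, ‖u k‖ < (q : ℝ) ^ ((s k : ℝ) * (q : ℝ) / ((q : ℝ) - 1)))
    (n : ℕ) :
    Summable (fun i : Fin r → ℕ => PowerSeries.coeff (R := K) n (polyLogTerm q θ s u i)) := by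
  have hq0 : (0:ℝ) < q := by positivity
  apply Summable.of_norm_bounded
    (g := fun i : Fin r → ℕ => ∏ k, ((q : ℝ) ^ ((s k : ℝ) * (q : ℝ) / ((q : ℝ) - 1)))
          * (‖u k‖ / ((q : ℝ) ^ ((s k : ℝ) * (q : ℝ) / ((q : ℝ) - 1)))) ^ i k)
  · apply summable_pi_prod
      (h := fun k m => ((q : ℝ) ^ ((s k : ℝ) * (q : ℝ) / ((q : ℝ) - 1)))
          * (‖u k‖ / ((q : ℝ) ^ ((s k : ℝ) * (q : ℝ) / ((q : ℝ) - 1)))) ^ m)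
    · intro k
      apply Summable.mul_left
      apply summable_geometric_of_lt_one (by positivity)
      rw [div_lt_one (by positivity)]
      exact hu k
    · intro k m; positivity
  · exact polyLogTerm_coeff_bound hq2 hθ s u hu n

end Master

/-! ### Combinatorics of compositions -/

section Comb

variable {r : ℕ}

def adjL (k : Fin (r - 1)) : Fin r := ⟨k.1, by omega⟩
def adjR (k : Fin (r - 1)) : Fin r := ⟨k.1 + 1, by omega⟩

theorem index_monotone (c : Composition r) : Monotone c.index := by
  intro a b hab
  rw [Fin.le_def] at hab
  show (c.index a).1 ≤ (c.index b).1
  exact Nat.find_mono fun n hn => ⟨lt_of_le_of_lt hab hn.1, hn.2⟩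

def sec (c : Composition r) (b : Fin c.length) : Fin r :=
  c.embedding b ⟨0, c.one_le_blocksFun b⟩

theorem sec_coe (c : Composition r) (b : Fin c.length) : (sec c b : ℕ) = c.sizeUpTo b := by
  simp [sec, Composition.coe_embedding]

theorem index_sec (c : Composition r) (b : Fin c.length) : c.index (sec c b) = b :=
  c.index_embedding b _

theorem sec_monotone (c : Composition r) : Monotone (sec c) := by
  intro a b hab
  rw [Fin.le_def, sec_coe, sec_coe]
  exact c.monotone_sizeUpTo (by exact_mod_cast hab)

/-- propagation of equality on blocks -/
theorem eq_of_index_eq (c : Composition r) {j : Fin r → ℕ}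
    (hP : ∀ k : Fin (r - 1), c.index (adjL k) = c.index (adjR k) → j (adjL k) = j (adjR k)) :
    ∀ (m : ℕ) (a b : Fin r), b.1 = a.1 + m → c.index a = c.index b → j a = j b := by
  intro m
  induction m with
  | zero => intro a b hab _; congr 1; exact Fin.ext (by omega)
  | succ m ih =>
      intro a b hab hind
      have hb' : a.1 + m < r := by omega
      set b' : Fin r := ⟨a.1 + m, hb'⟩ with hb'def
      have h1 : c.index a ≤ c.index b' :=
        index_monotone c (show a.1 ≤ a.1 + m by omega)
      have h2 : c.index b' ≤ c.index b :=
        index_monotone c (show a.1 + m ≤ b.1 by omega)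
      have hab' : c.index a = c.index b' := le_antisymm h1 (hind ▸ h2)
      have hb'b : c.index b' = c.index b := hab' ▸ hind
      have hk : a.1 + m < r - 1 := by omega
      set k : Fin (r - 1) := ⟨a.1 + m, hk⟩
      have hL : adjL k = b' := rfl
      have hR : adjR k = b := Fin.ext (by show a.1 + m + 1 = b.1; omega)
      have := hP k (by rw [hL, hR]; exact hb'b)
      rw [hL, hR] at this
      rw [ih a b' rfl hab', this]

/-- the set of merged positions of a composition -/
def MSet (c : Composition r) : Finset (Fin (r - 1)) :=
  {k | c.index (adjL k) = c.index (adjR k)}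

theorem mem_MSet (c : Composition r) (k : Fin (r - 1)) :
    k ∈ MSet c ↔ c.index (adjL k) = c.index (adjR k) := by
  simp [MSet]

/-- adjacent indices differ iff `k+1` is a boundary point -/
theorem index_adj_ne_iff (c : Composition r) (k : Fin (r - 1)) :
    c.index (adjL k) ≠ c.index (adjR k) ↔ ∃ b : Fin (c.length + 1), c.sizeUpTo b.1 = k.1 + 1 := by
  constructor
  · intro hne
    have hle : c.index (adjL k) ≤ c.index (adjR k) :=
      index_monotone c (show k.1 ≤ k.1 + 1 by omega)
    have hlt : (c.index (adjL k)).1 < (c.index (adjR k)).1 := by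
      rcases lt_or_eq_of_le hle with h | h
      · exact h
      · exact absurd h hne
    refine ⟨⟨(c.index (adjL k)).1 + 1, by have := (c.index (adjR k)).2; omega⟩, ?_⟩
    have h1 : k.1 < c.sizeUpTo ((c.index (adjL k)).1 + 1) :=
      c.lt_sizeUpTo_index_succ (adjL k)
    have h2 : c.sizeUpTo ((c.index (adjL k)).1 + 1) ≤ c.sizeUpTo (c.index (adjR k)).1 :=
      c.monotone_sizeUpTo (by omega)
    have h3 : c.sizeUpTo (c.index (adjR k)).1 ≤ k.1 + 1 := c.sizeUpTo_index_le (adjR k)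
    show c.sizeUpTo ((c.index (adjL k)).1 + 1) = k.1 + 1
    omega
  · rintro ⟨b, hb⟩ heq
    have h1 : c.sizeUpTo (c.index (adjL k)).1 ≤ k.1 := c.sizeUpTo_index_le (adjL k)
    have h2 : k.1 + 1 < c.sizeUpTo ((c.index (adjR k)).1 + 1) :=
      c.lt_sizeUpTo_index_succ (adjR k)
    rw [← heq] at h2
    have hib : (c.index (adjL k)).1 < b.1 := by
      by_contra hle
      push_neg at hle
      have := c.monotone_sizeUpTo hle
      omega
    have hbi : b.1 < (c.index (adjL k)).1 + 1 := by
      by_contra hle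
      push_neg at hle
      have := c.monotone_sizeUpTo hle
      omega
    omega

/-- the interior-boundary finset attached to a composition -/
def BSet (c : Composition r) : Finset (Fin (r - 1)) :=
  compositionAsSetEquiv r (compositionEquiv r c)

theorem mem_BSet (c : Composition r) (k : Fin (r - 1)) :
    k ∈ BSet c ↔ ∃ b : Fin (c.length + 1), c.sizeUpTo b.1 = k.1 + 1 := by
  rw [BSet]
  show k ∈ (compositionAsSetEquiv r) c.toCompositionAsSet ↔ _
  rw [compositionAsSetEquiv]
  simp only [Equiv.coe_fn_mk, Set.mem_toFinset, Set.mem_setOf_eq]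
  change (⟨1 + k.1, _⟩ : Fin (r + 1)) ∈ c.toCompositionAsSet.boundaries ↔ _
  rw [Composition.toCompositionAsSet_boundaries, Composition.boundaries]
  simp only [Finset.mem_map, Finset.mem_univ, true_and]
  constructor
  · rintro ⟨b, hb⟩
    refine ⟨b, ?_⟩
    have h2 := congrArg Fin.val hb
    simpa [Composition.boundary, Nat.add_comm]
      using h2
  · rintro ⟨b, hb⟩
    refine ⟨b, ?_⟩
    apply Fin.ext
    show (c.boundary.toEmbedding b).1 = 1 + k.1
    simp [Composition.boundary, hb, Nat.add_comm]

theorem MSet_eq_compl_BSet (c : Composition r) : MSet c = (BSet c)ᶜ := by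
  ext k
  rw [mem_MSet, Finset.mem_compl, mem_BSet, ← index_adj_ne_iff, not_not]

def embBd : Fin (r - 1) ↪ Fin (r + 1) :=
  ⟨fun k => ⟨k.1 + 1, by omega⟩, fun a b h => Fin.ext (by
    have := congrArg Fin.val h
    simpa using this)⟩

theorem BSet_card (c : Composition r) (hr : 0 < r) : (BSet c).card = c.length - 1 := by
  have hmap : (BSet c).map embBd = (c.boundaries.erase 0).erase (Fin.last r) := by
    ext x
    simp only [Finset.mem_map, Finset.mem_erase]
    constructor
    · rintro ⟨k, hk, rfl⟩
      rw [mem_BSet] at hk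
      obtain ⟨b, hb⟩ := hk
      refine ⟨?_, ?_, ?_⟩
      · intro h
        have := congrArg Fin.val h
        change k.1 + 1 = (Fin.last r).1 at this
        simp [embBd, Fin.last] at this
        omega
      · intro h
        have := congrArg Fin.val h
        change k.1 + 1 = (0 : Fin (r + 1)).1 at this
        simp [embBd] at this
      · rw [Composition.boundaries, Finset.mem_map]
        refine ⟨b, Finset.mem_univ _, ?_⟩
        apply Fin.ext
        show (c.boundary b).1 = k.1 + 1
        simpa [Composition.boundary] using hb
    · rintro ⟨hlast, h0, hx⟩
      rw [Composition.boundaries, Finset.mem_map] at hx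
      obtain ⟨b, -, hb⟩ := hx
      have hbv : c.sizeUpTo b.1 = x.1 := by
        have := congrArg Fin.val hb
        simpa [Composition.boundary] using this
      have hx0 : x.1 ≠ 0 := fun h => h0 (Fin.ext (by simpa using h))
      have hxl : x.1 ≠ r := fun h => hlast (Fin.ext (by simpa [Fin.last] using h))
      have hxr : x.1 < r + 1 := x.2
      refine ⟨⟨x.1 - 1, by omega⟩, ?_, ?_⟩
      · rw [mem_BSet]
        exact ⟨b, by simpa using by omega⟩
      · apply Fin.ext
        show x.1 - 1 + 1 = x.1
        omega
  have h0mem : (0 : Fin (r + 1)) ∈ c.boundaries := by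
    rw [← c.boundary_zero, Composition.boundaries, Finset.mem_map]
    exact ⟨0, Finset.mem_univ _, rfl⟩
  have hlastmem : Fin.last r ∈ c.boundaries.erase 0 := by
    rw [Finset.mem_erase]
    refine ⟨?_, ?_⟩
    · intro h
      have := congrArg Fin.val h
      simp [Fin.last] at this
      omega
    · rw [← c.boundary_last, Composition.boundaries, Finset.mem_map]
      exact ⟨Fin.last _, Finset.mem_univ _, rfl⟩
  have := congrArg Finset.card hmap
  rw [Finset.card_map, Finset.card_erase_of_mem hlastmem, Finset.card_erase_of_mem h0mem,
    c.card_boundaries_eq_succ_length] at this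
  omega

theorem MSet_card (c : Composition r) (hr : 0 < r) : (MSet c).card = r - c.length := by
  have h1 : 0 < c.length := c.length_pos_of_pos hr
  have h2 : c.length ≤ r := c.length_le
  rw [MSet_eq_compl_BSet, Finset.card_compl, BSet_card c hr]
  simp only [Fintype.card_fin]
  omega

theorem MSet_bijective : Function.Bijective (fun c : Composition r => MSet c) := by
  have : (fun c : Composition r => MSet c)
      = (fun S : Finset (Fin (r - 1)) => Sᶜ)
        ∘ (fun c : Composition r => compositionAsSetEquiv r (compositionEquiv r c)) := by
    funext c
    exact MSet_eq_compl_BSet c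
  rw [this]
  exact (Function.Involutive.bijective (fun S => compl_compl S)).comp
    ((compositionAsSetEquiv r).bijective.comp (compositionEquiv r).bijective)

def ESet (j : Fin r → ℕ) : Finset (Fin (r - 1)) :=
  {k | j (adjL k) = j (adjR k)}

theorem mem_ESet (j : Fin r → ℕ) (k : Fin (r - 1)) :
    k ∈ ESet j ↔ j (adjL k) = j (adjR k) := by simp [ESet]

theorem strictAnti_iff_ESet_empty {j : Fin r → ℕ} (hj : Antitone j) :
    StrictAnti j ↔ ESet j = ∅ := by
  constructor
  · intro hs
    rw [Finset.eq_empty_iff_forall_notMem]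
    intro k hk
    rw [mem_ESet] at hk
    have : j (adjR k) < j (adjL k) := hs (show (adjL k).1 < (adjR k).1 by simp [adjL, adjR])
    omega
  · intro he a b hab
    rcases lt_or_eq_of_le (hj (le_of_lt hab)) with h | h
    · exact h
    exfalso
    have hk : a.1 < r - 1 := by have := b.2; have := (Fin.lt_def.mp hab); omega
    have hmem : (⟨a.1, hk⟩ : Fin (r - 1)) ∈ ESet j := by
      rw [mem_ESet]
      have h1 : j b ≤ j (adjR ⟨a.1, hk⟩) :=
        hj (show (adjR ⟨a.1, hk⟩).1 ≤ b.1 from by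
          have := Fin.lt_def.mp hab; show a.1 + 1 ≤ b.1; omega)
      have h2 : j (adjR ⟨a.1, hk⟩) ≤ j (adjL ⟨a.1, hk⟩) :=
        hj (show (adjL ⟨a.1, hk⟩).1 ≤ (adjR ⟨a.1, hk⟩).1 from by simp [adjL, adjR])
      have h3 : j (adjL ⟨a.1, hk⟩) = j a := rfl
      omega
    rw [he] at hmem
    exact absurd hmem (Finset.notMem_empty _)

/-- factorization equiv: antitone functions on blocks vs antitone functions respecting merges -/
def antitoneFactorEquiv (c : Composition r) :
    {i : Fin c.length → ℕ // Antitone i}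
      ≃ {j : Fin r → ℕ // Antitone j ∧ MSet c ⊆ ESet j} where
  toFun i := ⟨i.1 ∘ c.index, i.2.comp_monotone (index_monotone c), by
    intro k hk
    rw [mem_MSet] at hk
    rw [mem_ESet]
    show i.1 (c.index (adjL k)) = i.1 (c.index (adjR k))
    rw [hk]⟩
  invFun j := ⟨fun b => j.1 (sec c b), j.2.1.comp_monotone (sec_monotone c)⟩
  left_inv i := by
    apply Subtype.ext
    funext b
    show i.1 (c.index (sec c b)) = i.1 b
    rw [index_sec]
  right_inv j := by
    apply Subtype.ext
    funext k
    show j.1 (sec c (c.index k)) = j.1 k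
    have hP : ∀ k' : Fin (r - 1),
        c.index (adjL k') = c.index (adjR k') → j.1 (adjL k') = j.1 (adjR k') := by
      intro k' hk'
      have := j.2.2 ((mem_MSet c k').mpr hk')
      rwa [mem_ESet] at this
    refine eq_of_index_eq c hP (k.1 - c.sizeUpTo (c.index k)) (sec c (c.index k)) k ?_ ?_
    · rw [sec_coe]
      have := c.sizeUpTo_index_le k
      omega
    · rw [index_sec]

end Comb

/-- inclusion–exclusion identity used in Lemma 5.2 of the paper.
Subsets `S ⊆ {1,…,r−1}` (identifying `k` with `k+1` for `k ∈ S`, giving a partition of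
`{1,…,r}` into maximal runs of consecutive integers) correspond exactly to compositions
`c` of `r`, the blocks being the blocks of the composition, with `|S| = r − c.length`.
The merged index is `𝔰_S = (Σ_{k∈B_b} s_k)_b` and the merged point is `u_S = (Π_{k∈B_b} u_k)_b`.
The family defining `𝔏i_{𝔰,u}` and all the families defining `𝔏i⋆_{𝔰_S,u_S}` are summable in
`F[[t]]`, and `𝔏i_{𝔰,u} = Σ_S (−1)^{|S|}·𝔏i⋆_{𝔰_S,u_S}`. -/
theorem statement1
    {F : Type*} [NormedField F] [IsUltrametricDist F] [CompleteSpace F]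
    (q : ℕ) (hq : IsPrimePow q) (θ : F) (hθ : ‖θ‖ = (q : ℝ))
    {r : ℕ} (hr : 0 < r) (s : Fin r → ℕ) (hs : ∀ k, 0 < s k)
    (u : Fin r → F)
    (hu : ∀ k, ‖u k‖ < (q : ℝ) ^ ((s k : ℝ) * (q : ℝ) / ((q : ℝ) - 1))) :
    Summable (fun i : {i : Fin r → ℕ // StrictAnti i} => polyLogTerm q θ s u i.1)
    ∧ (∀ c : Composition r,
        Summable (fun i : {i : Fin c.length → ℕ // Antitone i} =>
          polyLogTerm q θ (fun b => ∑ j, s (c.embedding b j))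
            (fun b => ∏ j, u (c.embedding b j)) i.1))
    ∧ (∑' i : {i : Fin r → ℕ // StrictAnti i}, polyLogTerm q θ s u i.1)
        = ∑ c : Composition r,
            (-1 : PowerSeries F) ^ (r - c.length) *
              ∑' i : {i : Fin c.length → ℕ // Antitone i},
                polyLogTerm q θ (fun b => ∑ j, s (c.embedding b j))
                  (fun b => ∏ j, u (c.embedding b j)) i.1 := by
  classical
  have hq2 : 2 ≤ q := hq.two_le
  have hq0 : (0:ℝ) < q := by positivity
  have hmaster : ∀ n, Summable (fun i : Fin r → ℕ =>
      PowerSeries.coeff (R := F) n (polyLogTerm q θ s u i)) :=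
    polyLogTerm_coeff_summable hq2 hθ s u hu
  have h1 : Summable (fun i : {i : Fin r → ℕ // StrictAnti i} => polyLogTerm q θ s u i.1) :=
    ps_summable_of_coeff fun n => (hmaster n).subtype _
  have hu' : ∀ c : Composition r, ∀ b : Fin c.length,
      ‖∏ j, u (c.embedding b j)‖
        < (q : ℝ) ^ (((∑ j, s (c.embedding b j) : ℕ) : ℝ) * (q : ℝ) / ((q : ℝ) - 1)) := by
    intro c b
    have hexp : (q : ℝ) ^ (((∑ j, s (c.embedding b j) : ℕ) : ℝ) * (q : ℝ) / ((q : ℝ) - 1))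
        = ∏ j, (q : ℝ) ^ ((s (c.embedding b j) : ℝ) * (q : ℝ) / ((q : ℝ) - 1)) := by
      rw [← Real.rpow_sum_of_pos hq0]
      congr 1
      push_cast
      rw [Finset.sum_mul, Finset.sum_div]
    rw [hexp]
    have hne : (Finset.univ : Finset (Fin (c.blocksFun b))).Nonempty :=
      ⟨⟨0, c.one_le_blocksFun b⟩, Finset.mem_univ _⟩
    by_cases h0 : ∃ j, u (c.embedding b j) = 0
    · obtain ⟨j0, hj0⟩ := h0
      rw [Finset.prod_eq_zero (Finset.mem_univ j0) hj0, norm_zero]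
      exact Finset.prod_pos fun j _ => Real.rpow_pos_of_pos hq0 _
    · push_neg at h0
      rw [norm_prod]
      exact Finset.prod_lt_prod_of_nonempty
        (fun j _ => norm_pos_iff.mpr (h0 j)) (fun j _ => hu _) hne
  have hmaster' : ∀ (c : Composition r) (n : ℕ),
      Summable (fun i : Fin c.length → ℕ => PowerSeries.coeff (R := F) n
        (polyLogTerm q θ (fun b => ∑ j, s (c.embedding b j))
          (fun b => ∏ j, u (c.embedding b j)) i)) :=
    fun c n => polyLogTerm_coeff_summable hq2 hθ _ _ (hu' c) n
  have h2 : ∀ c : Composition r,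
      Summable (fun i : {i : Fin c.length → ℕ // Antitone i} =>
        polyLogTerm q θ (fun b => ∑ j, s (c.embedding b j))
          (fun b => ∏ j, u (c.embedding b j)) i.1) :=
    fun c => ps_summable_of_coeff fun n => ((hmaster' c n).subtype _)
  refine ⟨h1, h2, ?_⟩
  apply PowerSeries.ext
  intro n
  rw [ps_coeff_tsum h1 n, map_sum]
  set T : (Fin r → ℕ) → F := fun i => PowerSeries.coeff (R := F) n (polyLogTerm q θ s u i) with hTdef
  have hTsum : Summable T := hmaster n
  have hneg : ∀ (m : ℕ) (φ : PowerSeries F),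
      PowerSeries.coeff (R := F) n ((-1 : PowerSeries F) ^ m * φ)
        = (-1 : F) ^ m * PowerSeries.coeff (R := F) n φ := by
    intro m φ
    have hC : ((-1 : PowerSeries F) ^ m) = PowerSeries.C (R := F) ((-1 : F) ^ m) := by
      rw [map_pow, map_neg, map_one]
    rw [hC, PowerSeries.coeff_C_mul]
  have key : ∀ c : Composition r,
      PowerSeries.coeff (R := F) n ((-1 : PowerSeries F) ^ (r - c.length)
          * ∑' i : {i : Fin c.length → ℕ // Antitone i},
              polyLogTerm q θ (fun b => ∑ j, s (c.embedding b j))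
                (fun b => ∏ j, u (c.embedding b j)) i.1)
        = ∑' j, Set.indicator {j : Fin r → ℕ | Antitone j ∧ MSet c ⊆ ESet j}
            (fun j => (-1 : F) ^ (r - c.length) * T j) j := by
    intro c
    rw [hneg, ps_coeff_tsum (h2 c) n]
    have step1 : (∑' i : {i : Fin c.length → ℕ // Antitone i},
        PowerSeries.coeff (R := F) n (polyLogTerm q θ (fun b => ∑ j, s (c.embedding b j))
          (fun b => ∏ j, u (c.embedding b j)) i.1))
        = ∑' x : {j : Fin r → ℕ // Antitone j ∧ MSet c ⊆ ESet j}, T x.1 := by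
      rw [← Equiv.tsum_eq (antitoneFactorEquiv c)
        (fun x : {j : Fin r → ℕ // Antitone j ∧ MSet c ⊆ ESet j} => T x.1)]
      refine tsum_congr fun i => ?_
      show PowerSeries.coeff (R := F) n (polyLogTerm q θ (fun b => ∑ j, s (c.embedding b j))
          (fun b => ∏ j, u (c.embedding b j)) i.1) = T ((antitoneFactorEquiv c i).1)
      rw [hTdef]
      simp only []
      rw [polyLogTerm_merge]
      rfl
    rw [step1]
    rw [show (∑' x : {j : Fin r → ℕ // Antitone j ∧ MSet c ⊆ ESet j}, T x.1)
        = ∑' j, Set.indicator {j : Fin r → ℕ | Antitone j ∧ MSet c ⊆ ESet j} T j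
      from tsum_subtype _ T]
    rw [← tsum_mul_left]
    refine tsum_congr fun j => ?_
    rw [Set.indicator_apply, Set.indicator_apply]
    split
    · rfl
    · rw [mul_zero]
  rw [Finset.sum_congr rfl (fun c _ => key c)]
  have hsumm : ∀ c ∈ (Finset.univ : Finset (Composition r)),
      Summable (fun j => Set.indicator {j : Fin r → ℕ | Antitone j ∧ MSet c ⊆ ESet j}
        (fun j => (-1 : F) ^ (r - c.length) * T j) j) :=
    fun c _ => (hTsum.mul_left _).indicator _
  rw [← Summable.tsum_finsetSum hsumm]
  rw [show (∑' i : {i : Fin r → ℕ // StrictAnti i},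
      PowerSeries.coeff (R := F) n (polyLogTerm q θ s u i.1))
    = ∑' j, Set.indicator {j : Fin r → ℕ | StrictAnti j} T j
    from tsum_subtype {j : Fin r → ℕ | StrictAnti j} T]
  refine tsum_congr fun j => ?_
  have hcast : ∀ E : Finset (Fin (r - 1)),
      (∑ S ∈ E.powerset, (-1 : F) ^ S.card) = if E = ∅ then 1 else 0 := by
    intro E
    have h := Finset.sum_powerset_neg_one_pow_card (x := E)
    have h2 : (((∑ m ∈ E.powerset, (-1 : ℤ) ^ m.card) : ℤ) : F)
        = ∑ S ∈ E.powerset, (-1 : F) ^ S.card := by push_cast; rfl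
    rw [← h2, h]
    split <;> simp
  by_cases hj : Antitone j
  · have hstep : ∀ c : Composition r,
        Set.indicator {j : Fin r → ℕ | Antitone j ∧ MSet c ⊆ ESet j}
          (fun j => (-1 : F) ^ (r - c.length) * T j) j
        = if MSet c ⊆ ESet j then (-1 : F) ^ (MSet c).card * T j else 0 := by
      intro c
      rw [Set.indicator_apply, MSet_card c hr]
      by_cases hsub : MSet c ⊆ ESet j
      · rw [if_pos ⟨hj, hsub⟩, if_pos hsub]
      · rw [if_neg (fun h => hsub h.2), if_neg hsub]
    rw [Finset.sum_congr rfl (fun c _ => hstep c)]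
    rw [Fintype.sum_bijective (fun c : Composition r => MSet c) MSet_bijective _
      (fun S : Finset (Fin (r - 1)) => if S ⊆ ESet j then (-1 : F) ^ S.card * T j else 0)
      (fun c => rfl)]
    rw [show (∑ S : Finset (Fin (r - 1)), if S ⊆ ESet j then (-1 : F) ^ S.card * T j else 0)
        = ∑ S ∈ Finset.univ.filter (· ⊆ ESet j), (-1 : F) ^ S.card * T j
      from (Finset.sum_filter _ _).symm]
    rw [show Finset.univ.filter (· ⊆ ESet j) = (ESet j).powerset by
      ext S; simp [Finset.mem_powerset]]
    rw [← Finset.sum_mul, hcast]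
    by_cases hstrict : StrictAnti j
    · rw [if_pos ((strictAnti_iff_ESet_empty hj).mp hstrict), one_mul,
        Set.indicator_of_mem (by exact hstrict)]
    · rw [if_neg (fun h => hstrict ((strictAnti_iff_ESet_empty hj).mpr h)), zero_mul,
        Set.indicator_of_notMem (by exact hstrict)]
  · have hnotmem : j ∉ {j : Fin r → ℕ | StrictAnti j} := fun h => hj (StrictAnti.antitone h)
    rw [Set.indicator_of_notMem hnotmem]
    rw [Finset.sum_eq_zero]
    intro c _
    exact Set.indicator_of_notMem (fun h => hj h.1) _
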